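/- Let h ≥ 1 be an integer and let n = 2k where k ≥ 1 is an odd integer. If the cyclotomic polynomial Φ_n(t) divides p_h(t) = t^{4h} − t^{4h−1} + t^{2h} − t + 1 in ℤ[t], then n = 10 and h is congruent to either 1 or 2 modulo 5. -/

import Mathlib

open Polynomial Finset ArithmeticFunction
open scoped ArithmeticFunction.Moebius

lemma sum_nthRootsFinset {n : ℕ} (hn : 1 < n) :
    ∑ τ ∈ Polynomial.nthRootsFinset n (1 : ℂ), τ = 0 := by
  have h0 : n ≠ 0 := by omega
  have hz := Complex.isPrimitiveRoot_exp n h0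
  set z := Complex.exp (2 * Real.pi * Complex.I / n) with hzdef
  have himg : Polynomial.nthRootsFinset n (1 : ℂ) = (Finset.range n).image (z ^ ·) := by
    symm
    apply Finset.eq_of_subset_of_card_le
    · intro x hx
      simp only [Finset.mem_image, Finset.mem_range] at hx
      obtain ⟨i, hi, rfl⟩ := hx
      exact (Polynomial.mem_nthRootsFinset (by omega) 1).2
        (by rw [← pow_mul, mul_comm, pow_mul, hz.pow_eq_one, one_pow])
    · rw [hz.card_nthRootsFinset, Finset.card_image_of_injOn, Finset.card_range]
      intro i hi j hj hij
      exact hz.pow_inj (Finset.mem_range.1 hi) (Finset.mem_range.1 hj) hij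
  rw [himg, Finset.sum_image (fun i hi j hj hij =>
    hz.pow_inj (Finset.mem_range.1 hi) (Finset.mem_range.1 hj) hij)]
  rw [geom_sum_eq (hz.ne_one hn) n, hz.pow_eq_one, sub_self, zero_div]

lemma nthRootsFinset_one_eq : Polynomial.nthRootsFinset 1 (1 : ℂ) = {1} := by
  apply Finset.eq_of_subset_of_card_le
  · intro x hx
    rw [Polynomial.mem_nthRootsFinset Nat.one_pos (1 : ℂ), pow_one] at hx
    simp [hx]
  · rw [(Complex.isPrimitiveRoot_exp 1 one_ne_zero).card_nthRootsFinset]; simp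

lemma sum_primitiveRoots_eq_moebius (n : ℕ) (hn : 0 < n) :
    ∑ τ ∈ primitiveRoots n ℂ, τ = ((μ n : ℤ) : ℂ) := by
  have key : ∀ m > 0, ∑ i ∈ Nat.divisors m, (∑ τ ∈ primitiveRoots i ℂ, τ)
      = (if m = 1 then (1:ℂ) else 0) := by
    intro m hm
    have hz := Complex.isPrimitiveRoot_exp m (by omega)
    rw [← Finset.sum_biUnion (fun i _ j _ hij => IsPrimitiveRoot.disjoint hij),
      ← IsPrimitiveRoot.nthRoots_one_eq_biUnion_primitiveRoots (n := m)]
    by_cases h1 : m = 1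
    · subst h1
      rw [if_pos rfl, nthRootsFinset_one_eq]; simp
    · rw [if_neg h1, sum_nthRootsFinset (by omega)]
  have := (sum_eq_iff_sum_smul_moebius_eq
    (f := fun i => ∑ τ ∈ primitiveRoots i ℂ, τ)
    (g := fun m => if m = 1 then (1:ℂ) else 0)).mp key n hn
  rw [← this, Finset.sum_eq_single (n, 1)]
  · simp
  · rintro ⟨a, b⟩ hab hne
    rw [Nat.mem_divisorsAntidiagonal] at hab
    have hb : b ≠ 1 := by
      rintro rfl
      exact hne (by rw [Prod.mk.injEq]; exact ⟨by simpa using hab.1, rfl⟩)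
    simp [hb]
  · intro hmem
    exact absurd (Nat.mem_divisorsAntidiagonal.2 ⟨by simp, by omega⟩) hmem


lemma sum_comp_surj {G H : Type*} [CommGroup G] [Fintype G] [CommGroup H] [Fintype H]
    [DecidableEq H] (f : G →* H) (hf : Function.Surjective f) (F : H → ℂ) :
    ∑ g : G, F (f g) = ((Fintype.card G / Fintype.card H : ℕ) : ℂ) * ∑ y : H, F y := by
  classical
  set c := Fintype.card G / Fintype.card H with hc
  have hfib : ∀ y : H, #(Finset.univ.filter fun g => f g = y) = c := by
    have hconst : ∀ y : H, #(Finset.univ.filter fun g => f g = y)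
        = #(Finset.univ.filter fun g => f g = (1 : H)) := fun y =>
      MonoidHom.card_fiber_eq_of_mem_range f (hf y) ⟨1, map_one f⟩
    have hsum : ∑ y : H, #(Finset.univ.filter fun g => f g = y) = Fintype.card G := by
      rw [← Finset.card_eq_sum_card_fiberwise (fun x _ => Finset.mem_univ (f x))]
      rfl
    have hmul : Fintype.card H * #(Finset.univ.filter fun g => f g = (1:H)) = Fintype.card G := by
      rw [← hsum, Finset.sum_congr rfl (fun y _ => hconst y), Finset.sum_const, smul_eq_mul,
        Finset.card_univ]
    intro y
    rw [hconst y, hc, ← hmul, Nat.mul_div_cancel_left _ Fintype.card_pos]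
  have hsplit := Finset.sum_fiberwise_of_maps_to (s := (Finset.univ : Finset G))
    (t := (Finset.univ : Finset H)) (g := ⇑f) (fun x _ => Finset.mem_univ (f x))
    (fun g => F (f g))
  rw [← hsplit, Finset.mul_sum]
  apply Finset.sum_congr rfl
  intro y _
  trans (∑ _g ∈ Finset.univ.filter fun g => f g = y, F y)
  · exact Finset.sum_congr rfl (fun g hg => by rw [(Finset.mem_filter.1 hg).2])
  · rw [Finset.sum_const, hfib y, nsmul_eq_mul]

lemma sum_units_pow {k : ℕ} [NeZero k] {Z : ℂ} (hZ : Z ^ k = 1) :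
    ∑ j : (ZMod k)ˣ, Z ^ ((j : ZMod k).val)
      = ((Nat.totient k / Nat.totient (orderOf Z) : ℕ) : ℂ) * ((μ (orderOf Z) : ℤ) : ℂ) := by
  classical
  have hk0 : k ≠ 0 := NeZero.ne k
  set d := orderOf Z with hd
  have hdk : d ∣ k := orderOf_dvd_of_pow_eq_one hZ
  have hdpos : 0 < d := by
    have : IsOfFinOrder Z := isOfFinOrder_iff_pow_eq_one.2 ⟨k, Nat.pos_of_ne_zero hk0, hZ⟩
    exact this.orderOf_pos
  haveI : NeZero d := ⟨by omega⟩
  have hprim : IsPrimitiveRoot Z d := by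
    rw [hd]; exact IsPrimitiveRoot.orderOf Z
  have hpowmod : ∀ m : ℕ, Z ^ (m % d) = Z ^ m := fun m => by
    rw [hd]; exact pow_mod_orderOf Z m
  have hstep : ∀ j : (ZMod k)ˣ, Z ^ ((j : ZMod k).val)
      = Z ^ (((ZMod.unitsMap hdk j : ZMod d)).val) := by
    intro j
    have hcoe : ((ZMod.unitsMap hdk j : ZMod d)) = (((j : ZMod k).val : ℕ) : ZMod d) := by
      rw [ZMod.unitsMap_def]
      simp only [Units.coe_map, MonoidHom.coe_coe, ZMod.castHom_apply]
      rw [← ZMod.natCast_val]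
    rw [hcoe, ZMod.val_natCast, hpowmod]
  rw [Finset.sum_congr rfl (fun j _ => hstep j)]
  rw [sum_comp_surj (ZMod.unitsMap hdk) (ZMod.unitsMap_surjective hdk)
    (fun w : (ZMod d)ˣ => Z ^ ((w : ZMod d).val))]
  rw [ZMod.card_units_eq_totient, ZMod.card_units_eq_totient]
  congr 1
  rw [← sum_primitiveRoots_eq_moebius d hdpos]
  apply Finset.sum_bij (fun (w : (ZMod d)ˣ) _ => Z ^ ((w : ZMod d).val))
  · intro w _
    rw [mem_primitiveRoots hdpos]
    exact hprim.pow_of_coprime _ (ZMod.val_coe_unit_coprime w)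
  · intro w1 _ w2 _ heq
    have := hprim.pow_inj (ZMod.val_lt _) (ZMod.val_lt _) heq
    exact Units.ext (ZMod.val_injective d this)
  · intro τ hτ
    rw [mem_primitiveRoots hdpos, hprim.isPrimitiveRoot_iff] at hτ
    obtain ⟨i, hik, hcop, rfl⟩ := hτ
    refine ⟨ZMod.unitOfCoprime i hcop, Finset.mem_univ _, ?_⟩
    rw [ZMod.coe_unitOfCoprime, ZMod.val_natCast, hpowmod]
  · intro w _; rfl


lemma totient_one_odd {m : ℕ} (hm : Odd m) (h : Nat.totient m = 1) : m = 1 := by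
  rcases Nat.lt_or_ge m 3 with h3 | h3
  · interval_cases m
    · simp at h
    · rfl
    · rw [Nat.odd_iff] at hm; omega
  · have := Nat.totient_even h3
    rw [h] at this
    exact absurd this (by decide)

lemma dvd_of_primeFactors_subset {m : ℕ} (hs : Squarefree m) {s : Finset ℕ}
    (hsub : m.primeFactors ⊆ s) : m ∣ ∏ p ∈ s, p := by
  calc m = ∏ p ∈ m.primeFactors, p := (Nat.prod_primeFactors_of_squarefree hs).symm
  _ ∣ ∏ p ∈ s, p := Finset.prod_dvd_prod_of_subset _ _ _ hsub

lemma totient_two_odd {m : ℕ} (hm : Odd m) (hs : Squarefree m) (h : Nat.totient m = 2) :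
    m = 3 := by
  have hsub : m.primeFactors ⊆ ({3} : Finset ℕ) := by
    intro p hp
    obtain ⟨hprime, hdvd, -⟩ := Nat.mem_primeFactors.1 hp
    have h1 : p - 1 ∣ 2 := by
      have := Nat.totient_dvd_of_dvd hdvd
      rw [Nat.totient_prime hprime, h] at this
      exact this
    have hp2 : p ≠ 2 := by
      rintro rfl
      rw [Nat.odd_iff] at hm; omega
    have := hprime.two_le
    have hle : p - 1 ≤ 2 := Nat.le_of_dvd (by norm_num) h1
    have hub : p ≤ 3 := by omega
    have hlb : 2 ≤ p := hprime.two_le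
    interval_cases p
    · omega
    · simp
  have hdvd3 : m ∣ 3 := by simpa using dvd_of_primeFactors_subset hs hsub
  have hle := Nat.le_of_dvd (by norm_num) hdvd3
  have hpos : 0 < m := hs.ne_zero.bot_lt
  interval_cases m <;> revert h hdvd3 <;> decide

lemma totient_four_odd {m : ℕ} (hm : Odd m) (hs : Squarefree m) (h : Nat.totient m = 4) :
    m = 5 := by
  have hsub : m.primeFactors ⊆ ({3, 5} : Finset ℕ) := by
    intro p hp
    obtain ⟨hprime, hdvd, -⟩ := Nat.mem_primeFactors.1 hp
    have h1 : p - 1 ∣ 4 := by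
      have := Nat.totient_dvd_of_dvd hdvd
      rw [Nat.totient_prime hprime, h] at this
      exact this
    have hp2 : p ≠ 2 := by
      rintro rfl
      rw [Nat.odd_iff] at hm; omega
    have := hprime.two_le
    have hle : p - 1 ≤ 4 := Nat.le_of_dvd (by norm_num) h1
    have hub : p ≤ 5 := by omega
    have hlb : 2 ≤ p := hprime.two_le
    interval_cases p
    · omega
    · revert h1; decide
    · exact absurd hprime (by decide)
    · simp
  have hdvd15 : m ∣ 15 := by simpa using dvd_of_primeFactors_subset hs hsub
  have hle := Nat.le_of_dvd (by norm_num) hdvd15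
  have hpos : 0 < m := hs.ne_zero.bot_lt
  interval_cases m <;> revert h hdvd15 <;> decide

lemma moebius_trich (m : ℕ) : μ m = 0 ∨ ((μ m = 1 ∨ μ m = -1) ∧ Squarefree m) := by
  by_cases hs : Squarefree m
  · right
    refine ⟨?_, hs⟩
    rw [moebius_apply_of_squarefree hs]
    rcases Nat.even_or_odd (ArithmeticFunction.cardFactors m) with he | ho
    · left; exact he.neg_one_pow
    · right; exact ho.neg_one_pow
  · left; exact moebius_eq_zero_of_not_squarefree hs

lemma moebius_case_analysis {n1 n2 : ℕ} (ho1 : Odd n1) (ho2 : Odd n2)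
    (hp1 : 0 < n1) (hp2 : 0 < n2) (h3 : n1 ≠ 3) (h3' : n2 ≠ 3)
    (heq : 2 * (Nat.totient n2 : ℤ) * μ n1 + 2 * (Nat.totient n1 : ℤ) * μ n2
      + (Nat.totient n1 : ℤ) * (Nat.totient n2 : ℤ) = 0) :
    n1 = 5 ∧ n2 = 5 := by
  have hA1 : 1 ≤ (Nat.totient n1 : ℤ) := by exact_mod_cast Nat.totient_pos.2 hp1
  have hB1 : 1 ≤ (Nat.totient n2 : ℤ) := by exact_mod_cast Nat.totient_pos.2 hp2
  set A := (Nat.totient n1 : ℤ) with hA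
  set B := (Nat.totient n2 : ℤ) with hB
  rcases moebius_trich n1 with hμ1 | ⟨hμ1 | hμ1, hsq1⟩ <;>
    rcases moebius_trich n2 with hμ2 | ⟨hμ2 | hμ2, hsq2⟩ <;>
      rw [hμ1, hμ2] at heq
  · exfalso; nlinarith
  · exfalso; nlinarith
  · -- μ1 = 0, μ2 = -1 : B = 2, n2 = 3
    exfalso
    have hB2 : B = 2 := by
      have hz : A * (B - 2) = 0 := by linarith
      rcases mul_eq_zero.1 hz with h | h
      · omega
      · omega
    exact h3' (totient_two_odd ho2 hsq2 (by rw [hB] at hB2; exact_mod_cast hB2))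
  · exfalso; nlinarith
  · exfalso; nlinarith
  · -- μ1 = 1, μ2 = -1
    exfalso
    have hBlt : B < 2 := by nlinarith
    have hB1' : Nat.totient n2 = 1 := by omega
    have hn2 : n2 = 1 := totient_one_odd ho2 hB1'
    rw [hn2] at hμ2
    simp at hμ2
  · -- μ1 = -1, μ2 = 0 : A = 2, n1 = 3
    exfalso
    have hA2 : A = 2 := by
      have hz : B * (A - 2) = 0 := by linarith
      rcases mul_eq_zero.1 hz with h | h
      · omega
      · omega
    exact h3 (totient_two_odd ho1 hsq1 (by rw [hA] at hA2; exact_mod_cast hA2))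
  · -- μ1 = -1, μ2 = 1
    exfalso
    have hAlt : A < 2 := by nlinarith
    have hA1' : Nat.totient n1 = 1 := by omega
    have hn1 : n1 = 1 := totient_one_odd ho1 hA1'
    rw [hn1] at hμ1
    simp at hμ1
  · -- μ1 = -1, μ2 = -1
    have hn1ne1 : n1 ≠ 1 := by rintro rfl; simp at hμ1
    have hn2ne1 : n2 ≠ 1 := by rintro rfl; simp at hμ2
    have hn1ge : 2 < n1 := by
      rcases ho1 with ⟨t, ht⟩; omega
    have hn2ge : 2 < n2 := by
      rcases ho2 with ⟨t, ht⟩; omega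
    obtain ⟨a, ha⟩ := Nat.totient_even hn1ge
    obtain ⟨b, hb⟩ := Nat.totient_even hn2ge
    have haz : A = 2 * a := by rw [hA, ha]; push_cast; ring
    have hbz : B = 2 * b := by rw [hB, hb]; push_cast; ring
    have key : ((a : ℤ) - 1) * ((b : ℤ) - 1) = 1 := by
      have : -2*B - 2*A + A*B = 0 := by linarith
      rw [haz, hbz] at this
      nlinarith [this]
    have ha1 : (a : ℤ) - 1 = 1 ∧ (b : ℤ) - 1 = 1 := by
      have hcases := Int.eq_one_or_neg_one_of_mul_eq_one' key
      rcases hcases with ⟨h1, h2⟩ | ⟨h1, h2⟩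
      · exact ⟨h1, h2⟩
      · exfalso; omega
    have hA4 : Nat.totient n1 = 4 := by omega
    have hB4 : Nat.totient n2 = 4 := by omega
    exact ⟨totient_four_odd ho1 hsq1 hA4, totient_four_odd ho2 hsq2 hB4⟩

theorem stmt_5 (h : ℕ) (hh : 1 ≤ h) (k : ℕ) (hk : 1 ≤ k) (hkodd : Odd k)
    (n : ℕ) (hn : n = 2 * k)
    (hdvd : cyclotomic n ℤ ∣
      (X : ℤ[X]) ^ (4 * h) - X ^ (4 * h - 1) + X ^ (2 * h) - X + 1) :
    n = 10 ∧ (h % 5 = 1 ∨ h % 5 = 2) := by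
  subst hn
  have hk0 : k ≠ 0 := by omega
  haveI : NeZero k := ⟨hk0⟩
  set a := 2 * h - 1 with hadef
  have haodd : Odd a := by rw [Nat.odd_iff]; omega
  have h2h : 2 * h = a + 1 := by omega
  have h4h : 4 * h = 2 * a + 2 := by omega
  have h4h1 : 4 * h - 1 = 2 * a + 1 := by omega
  rw [h2h, h4h1, h4h] at hdvd
  have key : ∀ τ : ℂ, IsPrimitiveRoot τ k →
      τ ^ (2*a+2) + τ ^ (2*a+1) + τ ^ (a+1) + τ + 1 = 0 := by
    intro τ hτ
    have hτ0 : τ ≠ 0 := fun h0 => by simpa [h0, zero_pow hk0] using hτ.pow_eq_one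
    have hcop2 : Nat.Coprime 2 k := by
      rw [Nat.prime_two.coprime_iff_not_dvd]
      rw [Nat.odd_iff] at hkodd; omega
    have hneg : IsPrimitiveRoot (-τ) (2 * k) := by
      constructor
      · have hexp : (-τ:ℂ) ^ (2*k) = (-1)^(2*k) * τ^(2*k) := by rw [neg_pow]
        rw [hexp, Even.neg_one_pow ⟨k, by ring⟩, one_mul, mul_comm 2 k, pow_mul,
          hτ.pow_eq_one, one_pow]
      · intro l hl
        have hτ2l : τ ^ (2 * l) = 1 := by
          have h2 : ((-τ) ^ l) ^ 2 = 1 := by rw [hl, one_pow]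
          rw [← pow_mul, mul_comm l 2, pow_mul, neg_sq, ← pow_mul] at h2
          exact h2
        have hkl : k ∣ l := by
          have hk2l : k ∣ 2 * l := hτ.dvd_of_pow_eq_one _ hτ2l
          exact (Nat.Coprime.dvd_of_dvd_mul_left (Nat.coprime_comm.1 hcop2) hk2l)
        have hτl : τ ^ l = 1 := by
          obtain ⟨c, rfl⟩ := hkl
          rw [pow_mul, hτ.pow_eq_one, one_pow]
        have hneg1 : (-1 : ℂ) ^ l = 1 := by
          have hx := hl
          rw [neg_pow, hτl, mul_one] at hx
          exact hx
        have hleven : 2 ∣ l := by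
          rcases Nat.even_or_odd l with he | ho
          · exact he.two_dvd
          · rw [ho.neg_one_pow] at hneg1; norm_num at hneg1
        exact Nat.Coprime.mul_dvd_of_dvd_of_dvd hcop2 hleven hkl
    haveI : NeZero (((2 * k : ℕ) : ℂ)) := ⟨Nat.cast_ne_zero.2 (by omega)⟩
    have hroot : (cyclotomic (2 * k) ℂ).IsRoot (-τ) := (isRoot_cyclotomic_iff).2 hneg
    obtain ⟨q, hq⟩ := hdvd
    have hqC := congrArg (Polynomial.map (Int.castRingHom ℂ)) hq
    rw [Polynomial.map_mul, map_cyclotomic] at hqC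
    have heval : (((X : ℤ[X]) ^ (2*a+2) - X ^ (2*a+1) + X ^ (a+1) - X + 1).map
        (Int.castRingHom ℂ)).eval (-τ) = 0 := by
      rw [hqC, eval_mul, hroot.eq_zero, zero_mul]
    simp only [Polynomial.map_add, Polynomial.map_sub, Polynomial.map_pow, map_X, map_one, Polynomial.map_one,
      eval_add, eval_sub, eval_pow, eval_X, eval_one] at heval
    rw [Even.neg_pow ⟨a+1, by ring⟩, Odd.neg_pow ⟨a, by ring⟩,
      Even.neg_pow (by rcases haodd with ⟨t, ht⟩; exact ⟨t+1, by omega⟩)] at heval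
    linear_combination heval
  have hk5 : k = 5 := by
    set om := Complex.exp (2 * Real.pi * Complex.I / k) with homdef
    have hom : IsPrimitiveRoot om k := Complex.isPrimitiveRoot_exp k hk0
    have hom0 : om ≠ 0 := Complex.exp_ne_zero _
    set Z := om ^ (a+1) with hZdef
    set W := om ^ a with hWdef
    have hZk : Z ^ k = 1 := by rw [hZdef, ← pow_mul, mul_comm (a+1) k, pow_mul, hom.pow_eq_one, one_pow]
    have hWk : W ^ k = 1 := by rw [hWdef, ← pow_mul, mul_comm a k, pow_mul, hom.pow_eq_one, one_pow]
    have hZik : (Z⁻¹) ^ k = 1 := by rw [inv_pow, hZk, inv_one]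
    have hWik : (W⁻¹) ^ k = 1 := by rw [inv_pow, hWk, inv_one]
    have hZ0 : Z ≠ 0 := pow_ne_zero _ hom0
    have hW0 : W ≠ 0 := pow_ne_zero _ hom0
    -- the basic relation for every unit
    have E : ∀ j : (ZMod k)ˣ, Z ^ ((j : ZMod k).val) + (Z⁻¹) ^ ((j : ZMod k).val)
        + W ^ ((j : ZMod k).val) + (W⁻¹) ^ ((j : ZMod k).val) = -1 := by
      intro j
      set v := ((j : ZMod k).val) with hv
      have hτ : IsPrimitiveRoot (om ^ v) k := hom.pow_of_coprime v (ZMod.val_coe_unit_coprime j)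
      have hτ0 : (om:ℂ) ^ v ≠ 0 := pow_ne_zero _ hom0
      have hrel := key (om ^ v) hτ
      have hZv : Z ^ v = (om ^ v) ^ (a+1) := by rw [hZdef, ← pow_mul, mul_comm, pow_mul]
      have hWv : W ^ v = (om ^ v) ^ a := by rw [hWdef, ← pow_mul, mul_comm, pow_mul]
      have hZiv : (Z⁻¹) ^ v = ((om ^ v) ^ (a+1))⁻¹ := by rw [inv_pow, hZv]
      have hWiv : (W⁻¹) ^ v = ((om ^ v) ^ a)⁻¹ := by rw [inv_pow, hWv]
      rw [hZv, hWv, hZiv, hWiv]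
      set τ := (om:ℂ) ^ v
      have hτa : τ ^ a ≠ 0 := pow_ne_zero _ hτ0
      have hτa1 : τ ^ (a+1) ≠ 0 := pow_ne_zero _ hτ0
      field_simp
      ring_nf
      ring_nf at hrel
      linear_combination (τ ^ a) * hrel
    -- sum it
    have hsum : (((Nat.totient k / Nat.totient (orderOf Z) : ℕ) : ℂ) * ((μ (orderOf Z) : ℤ) : ℂ)) * 2
        + (((Nat.totient k / Nat.totient (orderOf W) : ℕ) : ℂ) * ((μ (orderOf W) : ℤ) : ℂ)) * 2
        = -(Nat.totient k : ℂ) := by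
      have h1 := Finset.sum_congr rfl (fun j (_ : j ∈ (Finset.univ : Finset (ZMod k)ˣ)) => E j)
      rw [Finset.sum_add_distrib, Finset.sum_add_distrib, Finset.sum_add_distrib] at h1
      rw [sum_units_pow hZk, sum_units_pow hZik, sum_units_pow hWk, sum_units_pow hWik] at h1
      have hoinv : ∀ X : ℂ, orderOf (X⁻¹) = orderOf X := by
        have hdvd : ∀ X : ℂ, orderOf (X⁻¹) ∣ orderOf X := fun X =>
          orderOf_dvd_of_pow_eq_one (by rw [inv_pow, pow_orderOf_eq_one, inv_one])
        intro X
        refine Nat.dvd_antisymm (hdvd X) ?_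
        have := hdvd X⁻¹
        rwa [inv_inv] at this
      rw [hoinv Z, hoinv W] at h1
      rw [Finset.sum_const, Finset.card_univ, ZMod.card_units_eq_totient] at h1
      rw [nsmul_eq_mul] at h1
      linear_combination h1
    -- names for the orders
    set n1 := orderOf Z with hn1def
    set n2 := orderOf W with hn2def
    have hn1k : n1 ∣ k := orderOf_dvd_of_pow_eq_one hZk
    have hn2k : n2 ∣ k := orderOf_dvd_of_pow_eq_one hWk
    have hn1pos : 0 < n1 :=
      (isOfFinOrder_iff_pow_eq_one.2 ⟨k, by omega, hZk⟩).orderOf_pos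
    have hn2pos : 0 < n2 :=
      (isOfFinOrder_iff_pow_eq_one.2 ⟨k, by omega, hWk⟩).orderOf_pos
    have hodd_dvd : ∀ m : ℕ, m ∣ k → Odd m := by
      intro m hm
      rcases Nat.even_or_odd m with he | ho
      · exfalso
        have : (2:ℕ) ∣ k := dvd_trans he.two_dvd hm
        rw [Nat.odd_iff] at hkodd
        omega
      · exact ho
    set c1 := Nat.totient k / Nat.totient n1 with hc1
    set c2 := Nat.totient k / Nat.totient n2 with hc2
    -- integer form of the sum identity
    have hint : 2 * ((c1 : ℕ) : ℤ) * μ n1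
        + 2 * ((c2 : ℕ) : ℤ) * μ n2 + (Nat.totient k : ℤ) = 0 := by
      have : ((2 * ((c1 : ℕ) : ℤ) * μ n1
          + 2 * ((c2 : ℕ) : ℤ) * μ n2 + (Nat.totient k : ℤ) : ℤ) : ℂ)
          = ((0 : ℤ) : ℂ) := by
        push_cast
        linear_combination hsum
      exact_mod_cast this
    have f1 : ((c1 : ℕ) : ℤ) * (Nat.totient n1 : ℤ)
        = (Nat.totient k : ℤ) := by
      exact_mod_cast congrArg (Nat.cast : ℕ → ℤ)
        (Nat.div_mul_cancel (Nat.totient_dvd_of_dvd hn1k))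
    have f2 : ((c2 : ℕ) : ℤ) * (Nat.totient n2 : ℤ)
        = (Nat.totient k : ℤ) := by
      exact_mod_cast congrArg (Nat.cast : ℕ → ℤ)
        (Nat.div_mul_cancel (Nat.totient_dvd_of_dvd hn2k))
    have hK0 : (Nat.totient k : ℤ) ≠ 0 := by
      have := Nat.totient_pos.2 (by omega : 0 < k)
      exact_mod_cast this.ne'
    have heqz : (Nat.totient k : ℤ) * (2 * (Nat.totient n2 : ℤ) * μ n1
        + 2 * (Nat.totient n1 : ℤ) * μ n2 + (Nat.totient n1 : ℤ) * (Nat.totient n2 : ℤ)) = 0 := by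
      linear_combination ((Nat.totient n1 : ℤ) * (Nat.totient n2 : ℤ)) * hint
        - (2 * (Nat.totient n2 : ℤ) * μ n1) * f1 - (2 * (Nat.totient n1 : ℤ) * μ n2) * f2
    have heq2 : 2 * (Nat.totient n2 : ℤ) * μ n1 + 2 * (Nat.totient n1 : ℤ) * μ n2
        + (Nat.totient n1 : ℤ) * (Nat.totient n2 : ℤ) = 0 :=
      (mul_eq_zero.1 heqz).resolve_left hK0
    -- rule out order 3
    have helper : ∀ U V : ℂ, U ^ 3 = 1 → U ≠ 1 → V ≠ 0 → Odd (orderOf V) →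
        U + U⁻¹ + V + V⁻¹ = -1 → False := by
      intro U V hU3 hU1 hV0 hVodd hrel
      have hU0 : U ≠ 0 := by
        rintro rfl
        rw [zero_pow (by norm_num)] at hU3
        exact zero_ne_one hU3
      have hUquad : U^2 + U + 1 = 0 := by
        have hfact : (U - 1) * (U^2 + U + 1) = 0 := by linear_combination hU3
        rcases mul_eq_zero.1 hfact with hc | hc
        · exact absurd (by linear_combination hc) hU1
        · exact hc
      have hUinv : U⁻¹ = U^2 := by
        apply inv_eq_of_mul_eq_one_right
        linear_combination hU3
      have hVrel : V + V⁻¹ = 0 := by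
        rw [hUinv] at hrel
        linear_combination hrel - hUquad
      have hV2 : V^2 = -1 := by
        have hx : V * (V + V⁻¹) = V * 0 := by rw [hVrel]
        rw [mul_add, mul_inv_cancel₀ hV0, mul_zero] at hx
        linear_combination hx
      have h1 : (V^2)^(orderOf V) = (-1 : ℂ)^(orderOf V) := by rw [hV2]
      rw [← pow_mul, mul_comm 2 (orderOf V), pow_mul, pow_orderOf_eq_one, one_pow,
        hVodd.neg_one_pow] at h1
      norm_num at h1
    have hE1rel : Z + Z⁻¹ + W + W⁻¹ = -1 → False → True := fun _ _ => trivial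
    have hval1 : 1 < k → ((1 : (ZMod k)ˣ) : ZMod k).val = 1 := by
      intro hk1
      haveI : Fact (1 < k) := ⟨hk1⟩
      rw [Units.val_one, ZMod.val_one]
    have hn1ne3 : n1 ≠ 3 := by
      intro h3
      have h3k : (3:ℕ) ∣ k := h3 ▸ hn1k
      have hk1 : 1 < k := lt_of_lt_of_le (by norm_num) (Nat.le_of_dvd (by omega) h3k)
      have E1 := E 1
      rw [hval1 hk1] at E1
      simp only [pow_one] at E1
      refine helper Z W ?_ ?_ hW0 (hodd_dvd n2 hn2k) E1
      · rw [← h3]; exact pow_orderOf_eq_one Z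
      · intro hZ1
        rw [hn1def, hZ1, orderOf_one] at h3
        exact absurd h3 (by norm_num)
    have hn2ne3 : n2 ≠ 3 := by
      intro h3
      have h3k : (3:ℕ) ∣ k := h3 ▸ hn2k
      have hk1 : 1 < k := lt_of_lt_of_le (by norm_num) (Nat.le_of_dvd (by omega) h3k)
      have E1 := E 1
      rw [hval1 hk1] at E1
      simp only [pow_one] at E1
      refine helper W Z ?_ ?_ hZ0 (hodd_dvd n1 hn1k) (by linear_combination E1)
      · rw [← h3]; exact pow_orderOf_eq_one W
      · intro hW1
        rw [hn2def, hW1, orderOf_one] at h3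
        exact absurd h3 (by norm_num)
    obtain ⟨hn15, hn25⟩ := moebius_case_analysis (hodd_dvd n1 hn1k) (hodd_dvd n2 hn2k)
      hn1pos hn2pos hn1ne3 hn2ne3 heq2
    have hZ5 : Z ^ 5 = 1 := by rw [← hn15]; exact pow_orderOf_eq_one Z
    have hW5 : W ^ 5 = 1 := by rw [← hn25]; exact pow_orderOf_eq_one W
    have hom5 : om ^ 5 = 1 := by
      have hWZ : om * W = Z := by rw [hZdef, hWdef, pow_succ']
      have hx : om ^ 5 * W ^ 5 = Z ^ 5 := by rw [← mul_pow, hWZ]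
      rw [hW5, hZ5, mul_one] at hx
      exact hx
    exact Nat.dvd_antisymm (hom.dvd_of_pow_eq_one 5 hom5) (hn15 ▸ hn1k)

  refine ⟨by omega, ?_⟩
  rw [hk5] at key
  have hom : IsPrimitiveRoot (Complex.exp (2*Real.pi*Complex.I/5)) 5 := by
    have := Complex.isPrimitiveRoot_exp 5 (by norm_num)
    norm_num at this
    exact this
  set om := Complex.exp (2*Real.pi*Complex.I/5) with homdef
  have hrel := key om hom
  have hom5 : om^5 = 1 := hom.pow_eq_one
  have hom1 : om ≠ 1 := hom.ne_one (by norm_num)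
  have hPhi : om^4 + om^3 + om^2 + om + 1 = 0 := by
    have hfact : (om - 1) * (om^4+om^3+om^2+om+1) = 0 := by linear_combination hom5
    rcases mul_eq_zero.1 hfact with hc | hc
    · exact absurd (by linear_combination hc) hom1
    · exact hc
  have hred : ∀ m : ℕ, om ^ m = om ^ (m % 5) := by
    intro m
    conv_lhs => rw [← Nat.div_add_mod m 5, pow_add, pow_mul, hom5, one_pow, one_mul]
  rw [hred (2*a+2), hred (2*a+1), hred (a+1)] at hrel
  have e1 : (2*a+2) % 5 = (4*(h%5)) % 5 := by omega
  have e2 : (2*a+1) % 5 = (4*(h%5)+4) % 5 := by omega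
  have e3 : (a+1) % 5 = (2*(h%5)) % 5 := by omega
  rw [e1, e2, e3] at hrel
  have hr5 : h % 5 < 5 := Nat.mod_lt _ (by norm_num)
  set r := h % 5 with hrdef
  clear_value r
  interval_cases r
  · exfalso
    norm_num at hrel
    have h50 : (5:ℂ) = 0 := by
      linear_combination (om - om^3 - 4) * hPhi + (om^3 + om^2 + 3) * hrel
    norm_num at h50
  · exact Or.inl rfl
  · exact Or.inr rfl
  · exfalso
    norm_num at hrel
    have h50 : (5:ℂ) = 0 := by
      linear_combination (8 + 3*om) * hPhi + (-3 - 2*om - 2*om^2 - 3*om^3) * hrel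
    norm_num at h50
  · exfalso
    norm_num at hrel
    have h50 : (5:ℂ) = 0 := by
      linear_combination (5 - om + 2*om^2) * hPhi + (-2*om - om^2 - 2*om^3) * hrel
    norm_num at h50
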